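/- arXiv:2201.00305 — 3 statements merged into one kernel-verified Lean document; each statement's English description precedes it below -/
import Mathlib

section
/- Define b*_k(ℓ) = σ_{k-3}(ℓ) - 2^{k-2}·σ_{k-3}(ℓ/4), where σ_{k-3}(ℓ/4) is interpreted as 0 unless 4 divides ℓ. If p = 2k-5 is prime and the Kronecker symbol satisfies χ_{-p}(ℓ) = -1, then b*_k(ℓ) ≡ 0 (mod p). -/
/-- The Kronecker symbol evaluated at the prime 2 (as bottom argument). -/
def kroneckerChar₂ (a : ℤ) : ℤ :=
  if a % 2 = 0 then 0 else if a % 8 = 1 ∨ a % 8 = 7 then 1 else -1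

/-- The Kronecker symbol `(a / n)` for a natural number `n`, defined by splitting off
the 2-part of `n` and using the Jacobi symbol on the odd part. -/
def kroneckerSym (a : ℤ) (n : ℕ) : ℤ :=
  kroneckerChar₂ a ^ n.factorization 2 * jacobiSym a (ordCompl[2] n)

/-- `b*_k(ℓ) = σ_{k-3}(ℓ) - 2^{k-2} σ_{k-3}(ℓ/4)`, where the second term is `0`
unless `4 ∣ ℓ`. -/
def bStar (k ℓ : ℕ) : ℤ :=
  (∑ d ∈ ℓ.divisors, (d : ℤ) ^ (k - 3)) -
    2 ^ (k - 2) * (if 4 ∣ ℓ then ∑ d ∈ (ℓ / 4).divisors, (d : ℤ) ^ (k - 3) else 0)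

lemma kroneckerSym_one (a : ℤ) : kroneckerSym a 1 = 1 := by
  simp [kroneckerSym, jacobiSym.one_right]

lemma kroneckerSym_mul_right (a : ℤ) {m n : ℕ} (hm : m ≠ 0) (hn : n ≠ 0) :
    kroneckerSym a (m * n) = kroneckerSym a m * kroneckerSym a n := by
  unfold kroneckerSym
  rw [Nat.ordCompl_mul,
    jacobiSym.mul_right' a (Nat.ordCompl_pos 2 hm).ne' (Nat.ordCompl_pos 2 hn).ne',
    Nat.factorization_mul hm hn, Finsupp.add_apply, pow_add]
  ring

lemma kroneckerSym_pow (a : ℤ) {q : ℕ} (hq : q ≠ 0) (j : ℕ) :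
    kroneckerSym a (q ^ j) = kroneckerSym a q ^ j := by
  induction j with
  | zero => simpa using kroneckerSym_one a
  | succ n ih =>
      rw [pow_succ, kroneckerSym_mul_right a (pow_ne_zero _ hq) hq, ih, pow_succ]

lemma kroneckerSym_two (p : ℕ) : kroneckerSym (-(p : ℤ)) 2 = kroneckerChar₂ (-(p : ℤ)) := by
  have h1 : (2 : ℕ).factorization 2 = 1 := Nat.Prime.factorization_self Nat.prime_two
  rw [kroneckerSym, h1]
  norm_num [jacobiSym.one_right]

/-- At primes, the Kronecker symbol `χ_{-p}` agrees with the Legendre symbol `(·/p)`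
(when `p ≡ 3 mod 4`). -/
lemma kroneckerSym_prime_eq_legendre (p : ℕ) [Fact p.Prime] (hp4 : p % 4 = 3)
    {q : ℕ} (hq : q.Prime) : kroneckerSym (-(p : ℤ)) q = legendreSym p q := by
  have hpodd : Odd p := Nat.odd_iff.mpr (by omega)
  rcases hq.eq_two_or_odd' with rfl | hqodd
  · -- q = 2
    rw [kroneckerSym_two, Nat.cast_ofNat, legendreSym.at_two (by omega : p ≠ 2),
      ZMod.χ₈_nat_eq_if_mod_eight]
    unfold kroneckerChar₂
    have h8 : p % 8 = 3 ∨ p % 8 = 7 := by omega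
    have e2 : (-(p : ℤ)) % 2 = 1 := by omega
    rcases h8 with h | h
    · have e8 : (-(p : ℤ)) % 8 = 5 := by omega
      rw [e2, e8]
      norm_num [h]
      omega
    · have e8 : (-(p : ℤ)) % 8 = 1 := by omega
      rw [e2, e8]
      norm_num [h]
      omega
  · -- q odd
    have hf : q.factorization 2 = 0 :=
      Nat.factorization_eq_zero_of_not_dvd (by
        rw [Nat.two_dvd_ne_zero]; exact Nat.odd_iff.mp hqodd)
    rw [kroneckerSym, hf]
    simp only [pow_zero, Nat.div_one, one_mul]
    have hneg : jacobiSym (-(p : ℤ)) q = ZMod.χ₄ q * jacobiSym (p : ℤ) q :=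
      jacobiSym.neg (p : ℤ) hqodd
    rw [jacobiSym.legendreSym.to_jacobiSym, hneg]
    rcases Nat.odd_mod_four_iff.mp (Nat.odd_iff.mp hqodd) with h | h
    · rw [ZMod.χ₄_nat_one_mod_four h, one_mul,
        jacobiSym.quadratic_reciprocity_one_mod_four' hpodd h]
    · rw [ZMod.χ₄_nat_three_mod_four h,
        jacobiSym.quadratic_reciprocity_three_mod_four hp4 h]
      ring

lemma kroneckerSym_prime_pow_val (p k : ℕ) [Fact p.Prime] (hp4 : p % 4 = 3)
    (hk3 : k - 3 = p / 2) {q : ℕ} (hq : q.Prime)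
    (hχ : kroneckerSym (-(p : ℤ)) q = -1) : ((q : ZMod p)) ^ (k - 3) = -1 := by
  have h := legendreSym.eq_pow p (q : ℤ)
  rw [← kroneckerSym_prime_eq_legendre p hp4 hq, hχ] at h
  push_cast at h
  rw [hk3]
  exact h.symm

open ArithmeticFunction ArithmeticFunction.sigma in
lemma sigma_dvd_of_kroneckerSym_neg_one (p k : ℕ) [Fact p.Prime] (hp4 : p % 4 = 3)
    (hk3 : k - 3 = p / 2) :
    ∀ m : ℕ, 0 < m → kroneckerSym (-(p : ℤ)) m = -1 → p ∣ σ (k - 3) m := by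
  intro m
  induction m using Nat.strong_induction_on with
  | _ m IH =>
  intro hm hχ
  have hm1 : m ≠ 1 := by
    rintro rfl
    rw [kroneckerSym_one] at hχ
    norm_num at hχ
  obtain ⟨q, hq, hqd⟩ := Nat.exists_prime_and_dvd hm1
  set a := m.factorization q with ha
  have hq0 : q ≠ 0 := hq.pos.ne'
  have ha1 : 1 ≤ a := hq.factorization_pos_of_dvd hm.ne' hqd
  have hsplit : q ^ a * ordCompl[q] m = m := Nat.ordProj_mul_ordCompl_eq_self m q
  have hcop : Nat.Coprime (q ^ a) (ordCompl[q] m) :=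
    Nat.Coprime.pow_left _ (Nat.coprime_ordCompl hq hm.ne')
  have hm'pos : 0 < ordCompl[q] m := Nat.ordCompl_pos q hm.ne'
  have hχm : kroneckerSym (-(p : ℤ)) (q ^ a) * kroneckerSym (-(p : ℤ)) (ordCompl[q] m)
      = -1 := by
    rw [← kroneckerSym_mul_right _ (pow_ne_zero _ hq0) hm'pos.ne', hsplit]
    exact hχ
  have hσ : σ (k - 3) m = σ (k - 3) (q ^ a) * σ (k - 3) (ordCompl[q] m) := by
    have h := (isMultiplicative_sigma (k := k - 3)).map_mul_of_coprime hcop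
    rw [hsplit] at h
    exact h
  have hunit : IsUnit (kroneckerSym (-(p : ℤ)) (ordCompl[q] m)) :=
    isUnit_of_mul_isUnit_right (hχm ▸ isUnit_one.neg)
  rcases Int.isUnit_iff.mp hunit with h1 | h1
  · -- χ(m') = 1, so χ(q)^a = -1
    have hqa : kroneckerSym (-(p : ℤ)) q ^ a = -1 := by
      rw [← kroneckerSym_pow _ hq0]
      rw [h1, mul_one] at hχm
      exact hχm
    have hqv : kroneckerSym (-(p : ℤ)) q = -1 := by
      have hdvd : kroneckerSym (-(p : ℤ)) q ∣ (-1 : ℤ) :=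
        hqa ▸ dvd_pow_self _ (by omega : a ≠ 0)
      rcases Int.isUnit_iff.mp (isUnit_of_dvd_unit hdvd isUnit_one.neg) with h | h
      · rw [h, one_pow] at hqa; norm_num at hqa
      · exact h
    have haodd : Odd a := by
      by_contra he
      rw [Nat.not_odd_iff_even] at he
      rw [hqv, he.neg_one_pow] at hqa
      norm_num at hqa
    have hkey : ((q : ZMod p)) ^ (k - 3) = -1 :=
      kroneckerSym_prime_pow_val p k hp4 hk3 hq hqv
    have hdvd : p ∣ σ (k - 3) (q ^ a) := by
      rw [← ZMod.natCast_eq_zero_iff]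
      rw [sigma_apply_prime_pow hq]
      push_cast
      calc (∑ j ∈ Finset.range (a + 1), (q : ZMod p) ^ (j * (k - 3)))
          = ∑ j ∈ Finset.range (a + 1), (-1 : ZMod p) ^ j := by
            refine Finset.sum_congr rfl fun j _ => ?_
            rw [mul_comm, pow_mul, hkey]
        _ = 0 := by
            rw [neg_one_geom_sum, if_pos (Odd.add_one haodd)]
    exact hσ ▸ hdvd.mul_right _
  · -- χ(m') = -1, use IH
    have hlt : ordCompl[q] m < m :=
      Nat.div_lt_self hm (Nat.one_lt_pow (by omega : a ≠ 0) hq.one_lt)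
    exact hσ ▸ (IH _ hlt hm'pos h1).mul_left _

/-- If `k ≥ 4` is even, `p = 2k - 5` is prime and `χ_{-p}(ℓ) = -1`, then
`b*_k(ℓ) ≡ 0 (mod p)`. -/
theorem stmt2 (k : ℕ) (hk : 4 ≤ k) (hke : Even k) (p : ℕ) (hpk : p = 2 * k - 5)
    (hp : p.Prime) (ℓ : ℕ) (hℓ : 0 < ℓ)
    (hχ : kroneckerSym (-(p : ℤ)) ℓ = -1) :
    (p : ℤ) ∣ bStar k ℓ := by
  haveI : Fact p.Prime := ⟨hp⟩
  have hp4 : p % 4 = 3 := by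
    obtain ⟨j, rfl⟩ := hke
    omega
  have hk3 : k - 3 = p / 2 := by omega
  have main : ∀ m : ℕ, 0 < m → kroneckerSym (-(p : ℤ)) m = -1 →
      (p : ℤ) ∣ ∑ d ∈ m.divisors, (d : ℤ) ^ (k - 3) := by
    intro m hm hχm
    have h := sigma_dvd_of_kroneckerSym_neg_one p k hp4 hk3 m hm hχm
    have hcast : ∑ d ∈ m.divisors, (d : ℤ) ^ (k - 3)
        = ((ArithmeticFunction.sigma (k - 3) m : ℕ) : ℤ) := by
      rw [ArithmeticFunction.sigma_apply]
      push_cast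
      rfl
    rw [hcast]
    exact_mod_cast Int.natCast_dvd_natCast.mpr h
  unfold bStar
  refine dvd_sub (main ℓ hℓ hχ) (Dvd.dvd.mul_left ?_ _)
  split_ifs with h4
  · have hq4 : 0 < ℓ / 4 := Nat.div_pos (Nat.le_of_dvd hℓ h4) (by norm_num)
    have hsplit : (4 : ℕ) * (ℓ / 4) = ℓ := Nat.mul_div_cancel' h4
    have h4val : kroneckerSym (-(p : ℤ)) 4 = 1 := by
      have h42 : (4 : ℕ) = 2 ^ 2 := by norm_num
      rw [h42, kroneckerSym_pow _ (by norm_num), kroneckerSym_two]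
      have hpodd : (-(p : ℤ)) % 2 = 1 := by omega
      unfold kroneckerChar₂
      rw [if_neg (by omega)]
      split_ifs <;> norm_num
    have hχ4 : kroneckerSym (-(p : ℤ)) (ℓ / 4) = -1 := by
      have := kroneckerSym_mul_right (-(p : ℤ)) (by norm_num : (4:ℕ) ≠ 0) hq4.ne'
      rw [hsplit, hχ, h4val, one_mul] at this
      exact this.symm
    exact main _ hq4 hχ4
  · exact dvd_zero _
end

section
/- If χ_{-23}(ℓ) = -1 for a positive integer ℓ, where χ_{-23} is the Kronecker symbol attached to -23, then the Ramanujan tau function satisfies τ(ℓ) ≡ 0 (mod 23). -/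
/-- The Ramanujan tau function: the `n`-th coefficient of `q * ∏ (1 - q^i)^24`
(the product over `i ≤ n` suffices to determine the `n`-th coefficient). -/
noncomputable def ramanujanTau (n : ℕ) : ℤ :=
  PowerSeries.coeff (R := ℤ) n
    (PowerSeries.X * ∏ i ∈ Finset.range n, ((1 : PowerSeries ℤ) - PowerSeries.X ^ (i + 1)) ^ 24)

open Finset

namespace Pentagonal

def frank (S : Finset ℕ) : Finset ℕ :=
  if h : S.Nonempty then
    let M := S.max' h
    let s := S.min' h
    let u := ((Finset.range M).filter (fun x => x ∉ S)).sup id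
    if s ≤ M - u then insert (M + 1) ((S.erase s).erase (M - s + 1))
    else insert (M - u) (insert u (S.erase M))
  else ∅

lemma frank_eq {S : Finset ℕ} (h : S.Nonempty) :
    frank S =
      if S.min' h ≤ S.max' h - ((Finset.range (S.max' h)).filter (fun x => x ∉ S)).sup id then
        insert (S.max' h + 1) ((S.erase (S.min' h)).erase (S.max' h - S.min' h + 1))
      else insert (S.max' h - ((Finset.range (S.max' h)).filter (fun x => x ∉ S)).sup id)
        (insert (((Finset.range (S.max' h)).filter (fun x => x ∉ S)).sup id)
          (S.erase (S.max' h))) := by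
  rw [frank, dif_pos h]

lemma twice_sum_Icc (s M : ℕ) (h : s ≤ M) :
    2 * (∑ x ∈ Icc s M, x) + s * (s - 1) = (M + 1) * M := by
  have hsub : Icc s M = range (M + 1) \ range s := by
    ext x; simp [mem_Icc, mem_range, Nat.lt_succ_iff]; omega
  have hsplit : (∑ x ∈ Icc s M, x) + (∑ x ∈ range s, x) = ∑ x ∈ range (M + 1), x := by
    rw [hsub]; exact Finset.sum_sdiff (by intro x hx; simp [mem_range] at *; omega)
  have h1 := Finset.sum_range_id_mul_two (M + 1)
  have h2 := Finset.sum_range_id_mul_two s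
  simp only [Nat.add_sub_cancel] at h1
  generalize hP : (M + 1) * M = P at *
  generalize hQ : s * (s - 1) = Q at *
  omega

lemma frank_spec {a : ℕ} (ha : ∀ k : ℤ, 24 * (a : ℤ) + 1 ≠ k ^ 2)
    {S : Finset ℕ} (h0 : 0 ∉ S) (hsum : S.sum id = a) :
    frank S ≠ S ∧ (frank S).sum id = a ∧ (0 ∉ frank S) ∧ (∀ x ∈ frank S, x ≤ a) ∧
      ((frank S).card = S.card + 1 ∨ S.card = (frank S).card + 1) ∧ frank (frank S) = S := by
  have hne : S.Nonempty := by
    rcases S.eq_empty_or_nonempty with h | h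
    · exfalso; apply ha 1; subst h; simp at hsum; simp [← hsum]
    · exact h
  have hfr := frank_eq hne
  obtain ⟨M, hM_def⟩ : ∃ M, S.max' hne = M := ⟨_, rfl⟩
  obtain ⟨s, hs_def⟩ : ∃ s, S.min' hne = s := ⟨_, rfl⟩
  rw [hM_def, hs_def] at hfr
  obtain ⟨u, hu_def⟩ : ∃ u, ((Finset.range M).filter (fun x => x ∉ S)).sup id = u := ⟨_, rfl⟩
  rw [hu_def] at hfr
  have hM_mem : M ∈ S := hM_def ▸ S.max'_mem hne
  have hs_mem : s ∈ S := hs_def ▸ S.min'_mem hne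
  have hs1 : 1 ≤ s := by
    rcases Nat.eq_zero_or_pos s with h | h
    · exact absurd (h ▸ hs_mem) h0
    · exact h
  have hle : ∀ x ∈ S, x ≤ M := fun x hx => hM_def ▸ S.le_max' x hx
  have hsle : ∀ x ∈ S, s ≤ x := fun x hx => hs_def ▸ S.min'_le x hx
  have hsM : s ≤ M := hsle M hM_mem
  have hM1 : 1 ≤ M := le_trans hs1 hsM
  have hu_mem : u ∈ (Finset.range M).filter (fun x => x ∉ S) := by
    obtain ⟨b, hb, he⟩ := Finset.exists_mem_eq_sup _
      (⟨0, by simp [mem_filter, mem_range]; exact ⟨hM1, h0⟩⟩ :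
        ((Finset.range M).filter (fun x => x ∉ S)).Nonempty) id
    rw [← hu_def, he]; exact hb
  have huS : u ∉ S := (mem_filter.1 hu_mem).2
  have huM : u < M := mem_range.1 (mem_filter.1 hu_mem).1
  have hrun : ∀ x, u < x → x ≤ M → x ∈ S := by
    intro x h1 h2
    rcases eq_or_lt_of_le h2 with h | h
    · exact h ▸ hM_mem
    · by_contra hx
      have : x ≤ u := hu_def ▸ Finset.le_sup (f := id) (mem_filter.2 ⟨mem_range.2 h, hx⟩)
      omega
  have hsum2 : ∑ x ∈ S, x = a := hsum
  have helem : ∀ x ∈ S, x ≤ a := by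
    intro x hx
    have h1 : x ≤ ∑ x ∈ S, x :=
      Finset.single_le_sum (f := fun i : ℕ => i) (fun i _ => Nat.zero_le i) hx
    omega
  -- the sum bound for two distinct elements
  have hpair : ∀ x y, x ∈ S → y ∈ S → x ≠ y → x + y ≤ a := by
    intro x y hx hy hxy
    have hsub : {x, y} ⊆ S := by intro z hz; rcases mem_insert.1 hz with h | h
                                 · exact h ▸ hx
                                 · exact (mem_singleton.1 h) ▸ hy
    have h1 : ∑ z ∈ ({x, y} : Finset ℕ), z = x + y := Finset.sum_pair hxy
    have h2 : (∑ z ∈ ({x, y} : Finset ℕ), z) ≤ ∑ z ∈ S, z := Finset.sum_le_sum_of_subset hsub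
    omega

  by_cases hc : s ≤ M - u
  · -- Case 1: remove smallest part, lengthen the top run
    have hcs : s + u ≤ M := by omega
    have h2s : 2 * s ≤ M := by
      by_contra h'
      push_neg at h'
      have hS : S = Icc s M := by
        apply Finset.Subset.antisymm
        · intro x hx; rw [mem_Icc]; exact ⟨hsle x hx, hle x hx⟩
        · intro x hx; rw [mem_Icc] at hx; exact hrun x (by omega) hx.2
      have hu_eq : u = s - 1 := by
        have h2 : s - 1 ≤ u := hu_def ▸ Finset.le_sup (f := id) (mem_filter.2
          ⟨mem_range.2 (by omega), by rw [hS, mem_Icc]; push_neg; intro h; omega⟩)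
        omega
      have hM2 : M = 2 * s - 1 := by omega
      have he : 2 * a + s * (s - 1) = (M + 1) * M := by
        have ht := twice_sum_Icc s M hsM
        rw [← hsum2, hS]
        exact ht
      exfalso
      apply ha (6 * (s : ℤ) - 1)
      zify [hs1] at he
      zify [show 1 ≤ 2 * s by omega] at hM2
      rw [hM2] at he
      linear_combination 12 * he
    have hsltM : s < M := by omega
    have hMs1_mem : M - s + 1 ∈ S := hrun _ (by omega) (by omega)
    obtain ⟨T, hT_def⟩ : ∃ T, T = (S.erase s).erase (M - s + 1) := ⟨_, rfl⟩
    rw [← hT_def] at hfr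
    have hfr1 : frank S = insert (M + 1) T := by rw [hfr, if_pos hc]
    have hT_sub : T ⊆ S := fun x hx => mem_of_mem_erase (mem_of_mem_erase (hT_def ▸ hx))
    have hMs1_in_erase : M - s + 1 ∈ S.erase s := mem_erase.2 ⟨by omega, hMs1_mem⟩
    have hM1_not : M + 1 ∉ T := fun h => by have := hle _ (hT_sub h); omega
    have hcardT : T.card + 2 = S.card := by
      have h1 : 2 ≤ S.card := Finset.one_lt_card.2 ⟨s, hs_mem, M - s + 1, hMs1_mem, by omega⟩
      rw [hT_def, card_erase_of_mem hMs1_in_erase, card_erase_of_mem hs_mem]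
      omega
    have hcard : S.card = (frank S).card + 1 := by
      rw [hfr1, card_insert_of_notMem hM1_not]; omega
    have hsum' : (frank S).sum id = a := by
      show ∑ x ∈ frank S, x = a
      rw [hfr1, Finset.sum_insert hM1_not]
      have e1 : (∑ x ∈ T, x) + (M - s + 1) = ∑ x ∈ S.erase s, x := by
        rw [hT_def]; exact Finset.sum_erase_add _ (fun x => x) hMs1_in_erase
      have e2 : (∑ x ∈ S.erase s, x) + s = ∑ x ∈ S, x :=
        Finset.sum_erase_add _ (fun x => x) hs_mem
      omega
    have hmem_iff : ∀ x, x ∈ frank S ↔ (x = M + 1 ∨ (x ∈ S ∧ x ≠ s ∧ x ≠ M - s + 1)) := by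
      intro x
      rw [hfr1, mem_insert, hT_def, mem_erase, mem_erase]
      tauto
    have h0' : 0 ∉ frank S := by
      intro h
      rcases (hmem_iff 0).1 h with h | h
      · omega
      · exact h0 h.1
    have hbd : ∀ x ∈ frank S, x ≤ a := by
      intro x hx
      rcases (hmem_iff x).1 hx with h | h
      · have := hpair s M hs_mem hM_mem (by omega); omega
      · exact helem x h.1
    have hne' : (frank S).Nonempty := by rw [hfr1]; exact insert_nonempty _ _
    have hmax' : (frank S).max' hne' = M + 1 := by
      apply le_antisymm
      · apply Finset.max'_le; intro x hx
        rcases (hmem_iff x).1 hx with h | h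
        · omega
        · have := hle x h.1; omega
      · exact Finset.le_max' _ _ ((hmem_iff _).2 (Or.inl rfl))
    have hmin' : s + 1 ≤ (frank S).min' hne' := by
      have hm := (frank S).min'_mem hne'
      rcases (hmem_iff _).1 hm with h | h
      · omega
      · have h1 := hsle _ h.1; have h2 := h.2.1; omega
    have hu' : ((Finset.range ((frank S).max' hne')).filter (fun x => x ∉ frank S)).sup id
        = M - s + 1 := by
      rw [hmax']
      apply le_antisymm
      · apply Finset.sup_le; intro x hx
        rw [mem_filter, mem_range] at hx
        obtain ⟨hx1, hx2⟩ := hx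
        simp only [id_eq]
        by_contra h'
        push_neg at h'
        apply hx2
        have hxM : x ≤ M ∨ x = M + 1 := by omega
        rcases hxM with hxM | hxM
        · exact (hmem_iff x).2 (Or.inr ⟨hrun x (by omega) hxM, by omega, by omega⟩)
        · exact (hmem_iff x).2 (Or.inl hxM)
      · apply Finset.le_sup (f := id)
        rw [mem_filter, mem_range]
        refine ⟨by omega, fun h => ?_⟩
        rcases (hmem_iff _).1 h with h | h
        · omega
        · exact h.2.2 rfl
    have hfr2 : frank (frank S) = S := by
      rw [frank_eq hne', hu', hmax']
      rw [if_neg (by omega : ¬ (frank S).min' hne' ≤ M + 1 - (M - s + 1))]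
      rw [show M + 1 - (M - s + 1) = s by omega]
      have e4 : (frank S).erase (M + 1) = T := by rw [hfr1]; exact erase_insert hM1_not
      rw [e4, hT_def, insert_erase hMs1_in_erase, insert_erase hs_mem]
    refine ⟨fun h => by rw [h] at hcard; omega, hsum', h0', hbd, Or.inr hcard, hfr2⟩
  · -- Case 2: shorten the top run, add a new smallest part
    push_neg at hc
    have hu1 : 1 ≤ u := by
      by_contra h'
      push_neg at h'
      have h1 : (1 : ℕ) ∈ S := hrun 1 (by omega) hM1
      have := hsle 1 h1
      omega
    have h2t : M < 2 * u := by
      by_contra h'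
      push_neg at h'
      have hS : S = Icc s M := by
        apply Finset.Subset.antisymm
        · intro x hx; rw [mem_Icc]; exact ⟨hsle x hx, hle x hx⟩
        · intro x hx; rw [mem_Icc] at hx; exact hrun x (by omega) hx.2
      have hu_eq : u = s - 1 := by
        have h2 : s - 1 ≤ u := hu_def ▸ Finset.le_sup (f := id) (mem_filter.2
          ⟨mem_range.2 (by omega), by rw [hS, mem_Icc]; push_neg; intro h; omega⟩)
        omega
      have hM2 : M = 2 * s - 2 := by omega
      have he : 2 * a + s * (s - 1) = (M + 1) * M := by
        have ht := twice_sum_Icc s M hsM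
        rw [← hsum2, hS]
        exact ht
      exfalso
      apply ha (6 * (s : ℤ) - 5)
      zify [hs1] at he
      zify [show 2 ≤ 2 * s by omega] at hM2
      rw [hM2] at he
      linear_combination 12 * he
    have htnS : M - u ∉ S := fun h => by have := hsle _ h; omega
    obtain ⟨T, hT_def⟩ : ∃ T, T = insert u (S.erase M) := ⟨_, rfl⟩
    have hfr1 : frank S = insert (M - u) T := by rw [hfr, if_neg (by omega), ← hT_def]
    have huT : u ∉ S.erase M := fun h => huS (mem_of_mem_erase h)
    have htT : M - u ∉ T := by
      rw [hT_def, mem_insert]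
      push_neg
      exact ⟨by omega, fun h => htnS (mem_of_mem_erase h)⟩
    have hmem_iff : ∀ x, x ∈ frank S ↔ (x = M - u ∨ x = u ∨ (x ∈ S ∧ x ≠ M)) := by
      intro x
      rw [hfr1, mem_insert, hT_def, mem_insert, mem_erase]
      tauto
    have hcard : (frank S).card = S.card + 1 := by
      rw [hfr1, card_insert_of_notMem htT, hT_def, card_insert_of_notMem huT,
        card_erase_of_mem hM_mem]
      have h1 : 1 ≤ S.card := Finset.card_pos.2 hne
      omega
    have hsum' : (frank S).sum id = a := by
      show ∑ x ∈ frank S, x = a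
      rw [hfr1, Finset.sum_insert htT, hT_def, Finset.sum_insert huT]
      have e2 : (∑ x ∈ S.erase M, x) + M = ∑ x ∈ S, x :=
        Finset.sum_erase_add _ (fun x => x) hM_mem
      have hMa : M ≤ a := helem M hM_mem
      omega
    have h0' : 0 ∉ frank S := by
      intro h
      rcases (hmem_iff 0).1 h with h | h | h
      · omega
      · omega
      · exact h0 h.1
    have hbd : ∀ x ∈ frank S, x ≤ a := by
      intro x hx
      have hMa : M ≤ a := helem M hM_mem
      rcases (hmem_iff x).1 hx with h | h | h
      · omega
      · omega
      · exact helem x h.1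
    have hne' : (frank S).Nonempty := by rw [hfr1]; exact insert_nonempty _ _
    have hM1mem : M - 1 ∈ frank S := by
      by_cases hu' : u = M - 1
      · exact (hmem_iff _).2 (Or.inr (Or.inl hu'.symm))
      · exact (hmem_iff _).2 (Or.inr (Or.inr ⟨hrun _ (by omega) (by omega), by omega⟩))
    have hmax' : (frank S).max' hne' = M - 1 := by
      apply le_antisymm
      · apply Finset.max'_le
        intro x hx
        rcases (hmem_iff x).1 hx with h | h | h
        · omega
        · omega
        · have h1 := hle x h.1; have h2 := h.2; omega
      · exact Finset.le_max' _ _ hM1mem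
    have hmin' : (frank S).min' hne' = M - u := by
      apply le_antisymm
      · exact Finset.min'_le _ _ ((hmem_iff _).2 (Or.inl rfl))
      · apply Finset.le_min'
        intro x hx
        rcases (hmem_iff x).1 hx with h | h | h
        · omega
        · omega
        · have := hsle x h.1; omega
    have hu'bd : ((Finset.range (M - 1)).filter (fun x => x ∉ frank S)).sup id ≤ u - 1 := by
      apply Finset.sup_le
      intro x hx
      rw [mem_filter, mem_range] at hx
      obtain ⟨hx1, hx2⟩ := hx
      simp only [id_eq]
      by_contra h'
      push_neg at h'
      apply hx2
      rcases eq_or_lt_of_le (show u ≤ x by omega) with h | h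
      · exact (hmem_iff _).2 (Or.inr (Or.inl h.symm))
      · exact (hmem_iff _).2 (Or.inr (Or.inr ⟨hrun x h (by omega), by omega⟩))
    have hfr2 : frank (frank S) = S := by
      have h := frank_eq hne'
      rw [hmax', hmin'] at h
      rw [if_pos (by omega)] at h
      rw [show M - 1 + 1 = M by omega, show M - 1 - (M - u) + 1 = u by omega] at h
      rw [h, hfr1, erase_insert htT, hT_def, erase_insert huT, insert_erase hM_mem]
    refine ⟨fun h => by rw [h] at hcard; omega, hsum', h0', hbd, Or.inl hcard, hfr2⟩


lemma sum_neg_one_pow_eq_zero {R : Type*} [CommRing R] {N a : ℕ}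
    (ha : ∀ k : ℤ, 24 * (a : ℤ) + 1 ≠ k ^ 2) (haN : a ≤ N) :
    ∑ S ∈ ((Icc 1 N).powerset).filter (fun S => S.sum id = a), (-1 : R) ^ S.card = 0 := by
  have hmem : ∀ S : Finset ℕ,
      S ∈ ((Icc 1 N).powerset).filter (fun S => S.sum id = a) → 0 ∉ S ∧ S.sum id = a := by
    intro S hS
    rw [mem_filter, mem_powerset] at hS
    exact ⟨fun h => by have := hS.1 h; rw [mem_Icc] at this; omega, hS.2⟩
  apply Finset.sum_involution (fun S _ => frank S)
  · intro S hS
    obtain ⟨h0, hsum⟩ := hmem S hS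
    obtain ⟨-, -, -, -, hcard, -⟩ := frank_spec ha h0 hsum
    rcases hcard with h | h
    · rw [h, pow_succ]; ring
    · rw [h, pow_succ]; ring
  · intro S hS _
    obtain ⟨h0, hsum⟩ := hmem S hS
    exact (frank_spec ha h0 hsum).1
  · intro S hS
    obtain ⟨h0, hsum⟩ := hmem S hS
    obtain ⟨-, hsum', h0', hbd, -, -⟩ := frank_spec ha h0 hsum
    rw [mem_filter, mem_powerset]
    refine ⟨fun x hx => ?_, hsum'⟩
    rw [mem_Icc]
    have h1 := hbd x hx
    have h2 : x ≠ 0 := fun h => h0' (h ▸ hx)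
    omega
  · intro S hS
    obtain ⟨h0, hsum⟩ := hmem S hS
    exact (frank_spec ha h0 hsum).2.2.2.2.2

lemma coeff_prod_one_sub (R : Type*) [CommRing R] (N : ℕ) (e : ℕ → ℕ) (m : ℕ) :
    (PowerSeries.coeff (R := R) m) (∏ i ∈ range N, (1 - PowerSeries.X ^ e i)) =
      ∑ t ∈ (range N).powerset.filter (fun t => ∑ i ∈ t, e i = m), (-1 : R) ^ t.card := by
  have h1 : ∀ i ∈ range N,
      (1 - PowerSeries.X ^ e i : PowerSeries R) = (-(PowerSeries.X ^ e i)) + 1 := by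
    intro i _; ring
  rw [Finset.prod_congr rfl h1, Finset.prod_add]
  simp only [Finset.prod_const_one, mul_one]
  have h2 : ∀ t : Finset ℕ, (∏ i ∈ t, (-(PowerSeries.X ^ e i) : PowerSeries R)) =
      PowerSeries.C (R := R) ((-1 : R) ^ t.card) * PowerSeries.X ^ (∑ i ∈ t, e i) := by
    intro t
    have h3 : ∀ i ∈ t, (-(PowerSeries.X ^ e i) : PowerSeries R) =
        (-1) * PowerSeries.X ^ e i := by intro i _; ring
    rw [Finset.prod_congr rfl h3, Finset.prod_mul_distrib, Finset.prod_const,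
      Finset.prod_pow_eq_pow_sum]
    congr 1
    rw [map_pow, map_neg, map_one]
  rw [Finset.sum_congr rfl (fun t _ => h2 t), map_sum]
  simp only [PowerSeries.coeff_C_mul, PowerSeries.coeff_X_pow]
  rw [Finset.sum_filter]
  apply Finset.sum_congr rfl
  intro t _
  by_cases h : ∑ i ∈ t, e i = m
  · rw [if_pos h, if_pos h.symm, mul_one]
  · rw [if_neg h, if_neg (fun hh => h hh.symm), mul_zero]

lemma coeff_pent_eq_zero {R : Type*} [CommRing R] {N a : ℕ}
    (ha : ∀ k : ℤ, 24 * (a : ℤ) + 1 ≠ k ^ 2) (haN : a ≤ N) :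
    (PowerSeries.coeff (R := R) a) (∏ i ∈ range N, (1 - PowerSeries.X ^ (i + 1))) = 0 := by
  rw [coeff_prod_one_sub]
  rw [← sum_neg_one_pow_eq_zero (R := R) ha haN]
  apply Finset.sum_nbij' (fun t => t.image (· + 1)) (fun S => S.image (· - 1))
  · intro t ht
    rw [mem_filter, mem_powerset] at ht ⊢
    constructor
    · intro x hx
      rw [mem_image] at hx
      obtain ⟨y, hy, rfl⟩ := hx
      have := mem_range.1 (ht.1 hy)
      rw [mem_Icc]
      omega
    · rw [Finset.sum_image (by intro x _ y _ h; beta_reduce at h; omega)]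
      simpa using ht.2
  · intro S hS
    rw [mem_filter, mem_powerset] at hS ⊢
    have hS1 : ∀ x ∈ S, 1 ≤ x ∧ x ≤ N := by
      intro x hx
      have := hS.1 hx
      rw [mem_Icc] at this
      exact this
    constructor
    · intro x hx
      rw [mem_image] at hx
      obtain ⟨y, hy, rfl⟩ := hx
      have := hS1 y hy
      rw [mem_range]
      omega
    · rw [Finset.sum_image (by intro x hx y hy h; have := hS1 x hx; have := hS1 y hy; beta_reduce at h; omega)]
      rw [← hS.2]
      apply Finset.sum_congr rfl
      intro x hx
      have := hS1 x hx
      simp only [id_eq]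
      omega
  · intro t ht
    rw [mem_filter, mem_powerset] at ht
    ext x
    simp only [mem_image]
    constructor
    · rintro ⟨y, ⟨z, hz, rfl⟩, rfl⟩
      simpa using hz
    · intro hx
      exact ⟨x + 1, ⟨x, hx, rfl⟩, by omega⟩
  · intro S hS
    rw [mem_filter, mem_powerset] at hS
    ext x
    simp only [mem_image]
    constructor
    · rintro ⟨y, ⟨z, hz, rfl⟩, rfl⟩
      have := hS.1 hz
      rw [mem_Icc] at this
      have : z - 1 + 1 = z := by omega
      rwa [this]
    · intro hx
      have := hS.1 hx
      rw [mem_Icc] at this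
      exact ⟨x - 1, ⟨x, hx, rfl⟩, by omega⟩
  · intro t ht
    rw [Finset.card_image_of_injective _ (add_left_injective 1)]

lemma coeff_mult23_eq_zero {R : Type*} [CommRing R] {N m : ℕ} (hm : ¬ (23 ∣ m)) :
    (PowerSeries.coeff (R := R) m) (∏ i ∈ range N, (1 - PowerSeries.X ^ (23 * (i + 1)))) = 0 := by
  rw [coeff_prod_one_sub]
  have h : ((range N).powerset.filter (fun t => ∑ i ∈ t, 23 * (i + 1) = m)) = ∅ := by
    rw [Finset.filter_eq_empty_iff]
    intro t _ hc
    apply hm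
    rw [← hc, ← Finset.mul_sum]
    exact Dvd.intro _ rfl
  rw [h, Finset.sum_empty]




instance : Fact (Nat.Prime 23) := ⟨by norm_num⟩

instance charP_powerSeries : CharP (PowerSeries (ZMod 23)) 23 :=
  charP_of_injective_ringHom (f := PowerSeries.C (R := ZMod 23))
    (fun a b h => by
      have := congrArg (PowerSeries.constantCoeff (R := ZMod 23)) h
      simpa using this) 23

lemma pow23_eq (i : ℕ) :
    ((1 : PowerSeries (ZMod 23)) - PowerSeries.X ^ (i + 1)) ^ 23 =
      1 - PowerSeries.X ^ (23 * (i + 1)) := by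
  have h := sub_pow_char (R := PowerSeries (ZMod 23)) (p := 23) 1 (PowerSeries.X ^ (i + 1))
  rw [one_pow, ← pow_mul, Nat.mul_comm] at h
  exact h

lemma prod24_eq (N : ℕ) :
    (∏ i ∈ range N, ((1 : PowerSeries (ZMod 23)) - PowerSeries.X ^ (i + 1)) ^ 24) =
      (∏ i ∈ range N, ((1 : PowerSeries (ZMod 23)) - PowerSeries.X ^ (i + 1))) *
        ∏ i ∈ range N, ((1 : PowerSeries (ZMod 23)) - PowerSeries.X ^ (23 * (i + 1))) := by
  rw [← Finset.prod_mul_distrib]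
  apply Finset.prod_congr rfl
  intro i _
  rw [← pow23_eq i, ← pow_succ']

end Pentagonal

lemma nonsquare_of_kronecker {ℓ : ℕ} (hl : 0 < ℓ) (hχ : kroneckerSym (-23) ℓ = -1) :
    ¬ IsSquare ((ℓ : ZMod 23)) := by
  have hch2 : kroneckerChar₂ (-23) = 1 := by decide
  rw [kroneckerSym, hch2, one_pow, one_mul] at hχ
  have hm0 : 0 < ordCompl[2] ℓ := Nat.ordCompl_pos 2 hl.ne'
  have hmodd : Odd (ordCompl[2] ℓ) :=
    Nat.odd_iff.2 (Nat.two_dvd_ne_zero.mp (Nat.not_dvd_ordCompl Nat.prime_two hl.ne'))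
  set m := ordCompl[2] ℓ with hm_def
  -- flip the Jacobi symbol by quadratic reciprocity
  have hJm : jacobiSym (m : ℤ) 23 = -1 := by
    have h1 : ((-23 : ℤ)) = (-1) * ((23 : ℕ) : ℤ) := by norm_num
    rw [h1, jacobiSym.mul_left, jacobiSym.at_neg_one hmodd,
      jacobiSym.quadratic_reciprocity (by decide) hmodd,
      ZMod.χ₄_eq_neg_one_pow (Nat.odd_iff.1 hmodd)] at hχ
    have h2 : (23 : ℕ) / 2 = 11 := by norm_num
    rw [h2] at hχ
    rw [← hχ]
    have h3 : ((-1 : ℤ)) ^ (m / 2) * ((-1) ^ (11 * (m / 2)) * jacobiSym (m : ℤ) 23) =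
        (-1 : ℤ) ^ (12 * (m / 2)) * jacobiSym (m : ℤ) 23 := by
      rw [← mul_assoc, ← pow_add]
      congr 2
      omega
    rw [h3, pow_mul]
    norm_num
  have hns : ¬ IsSquare (((m : ℤ) : ZMod 23)) := ZMod.nonsquare_of_jacobiSym_eq_neg_one hJm
  rintro ⟨k, hk⟩
  apply hns
  have hsplit : 2 ^ (ℓ.factorization 2) * m = ℓ := Nat.ordProj_mul_ordCompl_eq_self ℓ 2
  have hcast : ((2 : ZMod 23)) ^ (ℓ.factorization 2) * (m : ZMod 23) = (ℓ : ZMod 23) := by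
    exact_mod_cast congrArg (fun x : ℕ => (x : ZMod 23)) hsplit
  have h5 : ((5 : ZMod 23)) ^ (ℓ.factorization 2) * ((5 : ZMod 23)) ^ (ℓ.factorization 2) =
      (2 : ZMod 23) ^ (ℓ.factorization 2) := by
    rw [← mul_pow, show (5 * 5 : ZMod 23) = 2 from by decide]
  have h5ne : ((5 : ZMod 23)) ^ (ℓ.factorization 2) ≠ 0 := pow_ne_zero _ (by decide)
  refine ⟨(k * ((5 : ZMod 23) ^ (ℓ.factorization 2))⁻¹), ?_⟩
  rw [← hcast, ← h5] at hk
  push_cast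
  field_simp
  linear_combination hk



/-- If `χ_{-23}(ℓ) = -1` for a positive integer `ℓ`, then `τ(ℓ) ≡ 0 (mod 23)`. -/
theorem stmt3 (ℓ : ℕ) (hℓ : 0 < ℓ) (hχ : kroneckerSym (-23) ℓ = -1) :
    (23 : ℤ) ∣ ramanujanTau ℓ := by
  obtain ⟨n, rfl⟩ : ∃ n, ℓ = n + 1 := ⟨ℓ - 1, by omega⟩
  have hns := nonsquare_of_kronecker hℓ hχ
  suffices h0 : ((ramanujanTau (n + 1) : ℤ) : ZMod 23) = 0 by
    exact_mod_cast (ZMod.intCast_zmod_eq_zero_iff_dvd (ramanujanTau (n + 1)) 23).1 h0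
  have hmap : (PowerSeries.map (Int.castRingHom (ZMod 23)))
      (∏ i ∈ Finset.range (n + 1), ((1 : PowerSeries ℤ) - PowerSeries.X ^ (i + 1)) ^ 24) =
      ∏ i ∈ Finset.range (n + 1),
        ((1 : PowerSeries (ZMod 23)) - PowerSeries.X ^ (i + 1)) ^ 24 := by
    rw [map_prod]
    apply Finset.prod_congr rfl
    intro i _
    rw [map_pow, map_sub, map_one, map_pow, PowerSeries.map_X]
  have h1 : ((ramanujanTau (n + 1) : ℤ) : ZMod 23) =
      PowerSeries.coeff (R := ZMod 23) n (∏ i ∈ Finset.range (n + 1),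
        ((1 : PowerSeries (ZMod 23)) - PowerSeries.X ^ (i + 1)) ^ 24) := by
    calc ((ramanujanTau (n + 1) : ℤ) : ZMod 23)
        = PowerSeries.coeff (R := ZMod 23) (n + 1) (PowerSeries.map (Int.castRingHom (ZMod 23))
            (PowerSeries.X * ∏ i ∈ Finset.range (n + 1),
              ((1 : PowerSeries ℤ) - PowerSeries.X ^ (i + 1)) ^ 24)) := by
          rw [PowerSeries.coeff_map]; rfl
      _ = PowerSeries.coeff (R := ZMod 23) (n + 1) (PowerSeries.X *
            (PowerSeries.map (Int.castRingHom (ZMod 23))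
              (∏ i ∈ Finset.range (n + 1),
                ((1 : PowerSeries ℤ) - PowerSeries.X ^ (i + 1)) ^ 24))) := by
          rw [map_mul, PowerSeries.map_X]
      _ = PowerSeries.coeff (R := ZMod 23) n (PowerSeries.map (Int.castRingHom (ZMod 23))
            (∏ i ∈ Finset.range (n + 1),
              ((1 : PowerSeries ℤ) - PowerSeries.X ^ (i + 1)) ^ 24)) :=
          PowerSeries.coeff_succ_X_mul _ _
      _ = _ := by rw [hmap]
  rw [h1, Pentagonal.prod24_eq, PowerSeries.coeff_mul]
  apply Finset.sum_eq_zero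
  intro p hp
  rw [Finset.HasAntidiagonal.mem_antidiagonal] at hp
  by_cases hdvd : (23 : ℕ) ∣ p.2
  · obtain ⟨b, hb⟩ := hdvd
    have ha : ∀ k : ℤ, 24 * (p.1 : ℤ) + 1 ≠ k ^ 2 := by
      intro k hk
      apply hns
      have h23 : (23 : ZMod 23) = 0 := by decide
      have hk' : 24 * ((p.1 : ℕ) : ZMod 23) + 1 = (k : ZMod 23) ^ 2 := by
        exact_mod_cast congrArg (fun z : ℤ => (z : ZMod 23)) hk
      have hn : n = p.1 + 23 * b := by omega
      refine ⟨(k : ZMod 23), ?_⟩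
      push_cast [hn]
      linear_combination hk' + ((b : ZMod 23) - (p.1 : ZMod 23)) * h23
    rw [Pentagonal.coeff_pent_eq_zero ha (by omega), zero_mul]
  · rw [Pentagonal.coeff_mult23_eq_zero hdvd, mul_zero]
end

section
/- Ramanujan's congruence mod 23 at primes: if q is a prime with Legendre symbol (q/23) = -1, then τ(q) ≡ 0 (mod 23). -/
instance : Fact (Nat.Prime 23) := ⟨by norm_num⟩

open Finset

namespace Frank

variable (A : Finset ℕ)

/-- candidate staircase bottoms -/
def bset (h : A.Nonempty) : Finset ℕ :=
  A.filter (fun x => Finset.Icc x (A.max' h) ⊆ A)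

lemma bset_nonempty (h : A.Nonempty) : (bset A h).Nonempty :=
  ⟨A.max' h, by simp [bset, Finset.mem_filter, A.max'_mem h, Finset.Icc_self,
    Finset.singleton_subset_iff]⟩

/-- bottom of the top staircase -/
def bf (h : A.Nonempty) : ℕ := (bset A h).min' (bset_nonempty A h)

lemma bf_mem (h : A.Nonempty) : bf A h ∈ A := by
  have := (bset A h).min'_mem (bset_nonempty A h)
  simp only [bset, mem_filter] at this
  exact this.1

lemma bf_icc (h : A.Nonempty) : Finset.Icc (bf A h) (A.max' h) ⊆ A := by
  have := (bset A h).min'_mem (bset_nonempty A h)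
  simp only [bset, mem_filter] at this
  exact this.2

lemma bf_le (h : A.Nonempty) {x : ℕ} (hx : x ∈ A)
    (hicc : Finset.Icc x (A.max' h) ⊆ A) : bf A h ≤ x :=
  (bset A h).min'_le x (by simp only [bset, mem_filter]; exact ⟨hx, hicc⟩)

lemma bf_pred_not_mem (h : A.Nonempty) (h0 : 0 ∉ A) : bf A h - 1 ∉ A := by
  intro hmem
  have hb1 : 1 ≤ bf A h := by
    rcases Nat.eq_zero_or_pos (bf A h) with h'|h'
    · exact absurd (h' ▸ bf_mem A h) h0
    · exact h'
  have hbM : bf A h ≤ A.max' h := A.le_max' _ (bf_mem A h)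
  have : Finset.Icc (bf A h - 1) (A.max' h) ⊆ A := by
    intro y hy
    rw [mem_Icc] at hy
    rcases eq_or_lt_of_le hy.1 with h'|h'
    · rwa [← h']
    · exact bf_icc A h (mem_Icc.mpr ⟨by omega, hy.2⟩)
  have := bf_le A h hmem this
  omega

/-- Franklin's involution -/
def g : Finset ℕ :=
  if h : A.Nonempty then
    if A.min' h + bf A h ≤ A.max' h + 1 then
      ((A.erase (A.min' h)) \ Finset.Icc (A.max' h - A.min' h + 1) (A.max' h)) ∪
        Finset.Icc (A.max' h - A.min' h + 2) (A.max' h + 1)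
    else
      ((A \ Finset.Icc (bf A h) (A.max' h)) ∪
        Finset.Icc (bf A h - 1) (A.max' h - 1)) ∪ {A.max' h + 1 - bf A h}
  else ∅

lemma sum_Icc_eq (b M : ℕ) (hb : 1 ≤ b) (hbM : b ≤ M) :
    2 * (∑ x ∈ Finset.Icc b M, x) + b * b = M * M + M + b := by
  obtain ⟨c, rfl⟩ : ∃ c, b = c + 1 := ⟨b - 1, by omega⟩
  have h1 : Finset.range (M + 1) = Finset.range (c+1) ∪ Finset.Icc (c+1) M := by
    ext x; simp only [Finset.mem_range, Finset.mem_Icc, Finset.mem_union]; omega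
  have hd : Disjoint (Finset.range (c+1)) (Finset.Icc (c+1) M) := by
    rw [Finset.disjoint_left]
    intro a ha hb2
    simp only [Finset.mem_range] at ha
    simp only [Finset.mem_Icc] at hb2
    omega
  have h2 := Finset.sum_range_id_mul_two (M + 1)
  have h3 := Finset.sum_range_id_mul_two (c + 1)
  have h4 : ∑ x ∈ Finset.range (M+1), x
      = (∑ x ∈ Finset.range (c+1), x) + ∑ x ∈ Finset.Icc (c+1) M, x := by
    rw [h1, Finset.sum_union hd]
  simp only [Nat.add_sub_cancel] at h2 h3
  nlinarith [h2, h3, h4]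

end Frank

namespace Frank

lemma icc_shift (a b : ℕ) (ha : 1 ≤ a) (hab : a ≤ b) :
    Finset.Icc a b = Finset.image (· + 1) (Finset.Icc (a-1) (b-1)) := by
  ext x
  simp only [Finset.mem_Icc, Finset.mem_image]
  constructor
  · rintro ⟨h1, h2⟩; exact ⟨x - 1, ⟨by omega, by omega⟩, by omega⟩
  · rintro ⟨y, ⟨h1, h2⟩, rfl⟩; omega

lemma sum_icc_shift (a b : ℕ) (ha : 1 ≤ a) (hab : a ≤ b) :
    ∑ x ∈ Finset.Icc a b, x = (∑ x ∈ Finset.Icc (a-1) (b-1), x) + (b + 1 - a) := by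
  rw [icc_shift a b ha hab]
  rw [Finset.sum_image (fun x _ y _ hxy => by omega)]
  rw [Finset.sum_add_distrib, Finset.sum_const, smul_eq_mul, mul_one, Nat.card_Icc]
  congr 1
  omega

lemma key1 (A : Finset ℕ) (h : A.Nonempty) (h0 : 0 ∉ A)
    (hcase : A.min' h + bf A h ≤ A.max' h + 1) (h2s : 2 * A.min' h ≤ A.max' h) :
    (∑ x ∈ g A, x) = (∑ x ∈ A, x) ∧ (g A).card + 1 = A.card ∧ g (g A) = A ∧
    (∀ x ∈ g A, 1 ≤ x ∧ x ≤ A.max' h + 1) := by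
  set M := A.max' h with hM
  set s := A.min' h with hs
  set b := bf A h with hb
  have hsA : s ∈ A := A.min'_mem h
  have hMA : M ∈ A := A.max'_mem h
  have hsle : ∀ x ∈ A, s ≤ x := fun x hx => A.min'_le x hx
  have hleM : ∀ x ∈ A, x ≤ M := fun x hx => A.le_max' x hx
  have hbA : b ∈ A := bf_mem A h
  have hbicc : ∀ y, b ≤ y → y ≤ M → y ∈ A := fun y h1 h2 => bf_icc A h (mem_Icc.mpr ⟨h1, h2⟩)
  have hbpred : b - 1 ∉ A := bf_pred_not_mem A h h0
  have hbM : b ≤ M := hleM _ hbA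
  have hsb : s ≤ b := hsle _ hbA
  have hs1 : 1 ≤ s := Nat.pos_of_ne_zero (fun e => h0 (e ▸ hsA))
  have hsM : s ≤ M := hleM _ hsA
  -- the interval of the s largest parts is inside A
  have hIccA : ∀ y, M - s + 1 ≤ y → y ≤ M → y ∈ A := fun y h1 h2 => hbicc y (by omega) h2
  have hgA : g A = ((A.erase s) \ Finset.Icc (M - s + 1) M) ∪ Finset.Icc (M - s + 2) (M + 1) := by
    rw [g, dif_pos h, if_pos hcase]
  set A' : Finset ℕ := ((A.erase s) \ Finset.Icc (M - s + 1) M) ∪ Finset.Icc (M - s + 2) (M + 1) with hA'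
  have hmem' : ∀ x, x ∈ A' ↔ ((x ∈ A ∧ x ≠ s ∧ ¬(M - s + 1 ≤ x ∧ x ≤ M)) ∨ (M - s + 2 ≤ x ∧ x ≤ M + 1)) := by
    intro x
    simp only [hA', mem_union, mem_sdiff, mem_erase, mem_Icc]
    tauto
  have hsub1 : Finset.Icc (M - s + 1) M ⊆ A.erase s := by
    intro y hy
    rw [mem_Icc] at hy
    rw [mem_erase]
    exact ⟨by omega, hIccA y hy.1 hy.2⟩
  have hdisj : Disjoint ((A.erase s) \ Finset.Icc (M - s + 1) M) (Finset.Icc (M - s + 2) (M + 1)) := by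
    rw [Finset.disjoint_left]
    intro x hx hx2
    rw [mem_sdiff, mem_erase, mem_Icc] at hx
    rw [mem_Icc] at hx2
    have := hleM x hx.1.2
    omega
  have hcard1 : (Finset.Icc (M - s + 1) M).card = s := by rw [Nat.card_Icc]; omega
  have hcard2 : (Finset.Icc (M - s + 2) (M + 1)).card = s := by rw [Nat.card_Icc]; omega
  have hsum' : (∑ x ∈ A', x) = ∑ x ∈ A, x := by
    rw [hA', Finset.sum_union hdisj]
    have e1 := Finset.sum_sdiff (f := id) hsub1
    simp only [id] at e1
    have e2 : (∑ x ∈ A.erase s, x) + s = ∑ x ∈ A, x := Finset.sum_erase_add A _ hsA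
    have e3 := sum_icc_shift (M - s + 2) (M + 1) (by omega) (by omega)
    have e4 : Finset.Icc (M - s + 2 - 1) (M + 1 - 1) = Finset.Icc (M - s + 1) M := by
      congr 1 <;> omega
    rw [e4] at e3
    omega
  have hcard' : A'.card + 1 = A.card := by
    rw [hA', Finset.card_union_of_disjoint hdisj]
    have e1 := Finset.card_sdiff_add_card_eq_card hsub1
    have e2 := Finset.card_erase_add_one hsA
    omega
  -- structure of A'
  have hA'ne : A'.Nonempty := ⟨M + 1, by rw [hmem']; right; omega⟩
  have hub' : ∀ x ∈ A', x ≤ M + 1 := by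
    intro x hx
    rw [hmem'] at hx
    rcases hx with ⟨hx, -, -⟩ | hx
    · have := hleM x hx; omega
    · omega
  have hlb' : ∀ x ∈ A', s + 1 ≤ x := by
    intro x hx
    rw [hmem'] at hx
    rcases hx with ⟨hx, hxs, -⟩ | hx
    · have := hsle x hx; omega
    · omega
  have hpos' : ∀ x ∈ A', 1 ≤ x := fun x hx => by have := hlb' x hx; omega
  have hM' : A'.max' hA'ne = M + 1 := by
    apply le_antisymm
    · exact Finset.max'_le _ _ _ hub'
    · exact Finset.le_max' _ _ (by rw [hmem']; right; omega)
  have hnotmem' : M - s + 1 ∉ A' := by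
    rw [hmem']
    rintro (⟨-, -, hcon⟩ | hcon) <;> omega
  have hbf' : bf A' hA'ne = M - s + 2 := by
    apply le_antisymm
    · apply bf_le A' hA'ne (by rw [hmem']; right; omega)
      rw [hM']
      intro y hy
      rw [mem_Icc] at hy
      rw [hmem']
      right
      exact hy
    · by_contra hcon
      push_neg at hcon
      apply hnotmem'
      apply bf_icc A' hA'ne
      rw [mem_Icc, hM']
      omega
  have hs'mem : A'.min' hA'ne ∈ A' := A'.min'_mem hA'ne
  have hs'lb : s + 1 ≤ A'.min' hA'ne := hlb' _ hs'mem
  have hcase' : ¬ (A'.min' hA'ne + bf A' hA'ne ≤ A'.max' hA'ne + 1) := by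
    rw [hbf', hM']
    omega
  have hgg : g A' = A := by
    rw [g, dif_pos hA'ne, if_neg hcase', hbf', hM']
    have hsval : M + 1 + 1 - (M - s + 2) = s := by omega
    rw [hsval]
    ext x
    simp only [mem_union, mem_sdiff, mem_Icc, mem_singleton, hmem' x]
    by_cases hx : x ∈ A
    · have h1 := hleM x hx
      have h2 := hsle x hx
      simp only [hx, true_and, iff_true, true_iff]
      omega
    · have h2 : ¬(M - s + 1 ≤ x ∧ x ≤ M) := fun hc => hx (hIccA x hc.1 hc.2)
      have h3 : x ≠ s := fun e => hx (e ▸ hsA)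
      simp only [hx, false_and, false_or, and_false, or_false, iff_false, false_iff]
      omega
  refine ⟨by rw [hgA]; exact hsum', by rw [hgA]; exact hcard', ?_, ?_⟩
  · rw [hgA]; exact hgg
  · rw [hgA]; intro x hx; exact ⟨hpos' x hx, hub' x hx⟩

lemma key2 (A : Finset ℕ) (h : A.Nonempty) (h0 : 0 ∉ A)
    (hcase : ¬ (A.min' h + bf A h ≤ A.max' h + 1)) (hnc : A.max' h + 3 ≤ 2 * bf A h) :
    (∑ x ∈ g A, x) = (∑ x ∈ A, x) ∧ A.card + 1 = (g A).card ∧ g (g A) = A ∧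
    (∀ x ∈ g A, 1 ≤ x ∧ x ≤ A.max' h + 1) := by
  set M := A.max' h with hM
  set s := A.min' h with hs
  set b := bf A h with hb
  have hsA : s ∈ A := A.min'_mem h
  have hMA : M ∈ A := A.max'_mem h
  have hsle : ∀ x ∈ A, s ≤ x := fun x hx => A.min'_le x hx
  have hleM : ∀ x ∈ A, x ≤ M := fun x hx => A.le_max' x hx
  have hbA : b ∈ A := bf_mem A h
  have hbicc : ∀ y, b ≤ y → y ≤ M → y ∈ A := fun y h1 h2 => bf_icc A h (mem_Icc.mpr ⟨h1, h2⟩)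
  have hbpred : b - 1 ∉ A := bf_pred_not_mem A h h0
  have hbM : b ≤ M := hleM _ hbA
  have hsb : s ≤ b := hsle _ hbA
  have hs1 : 1 ≤ s := Nat.pos_of_ne_zero (fun e => h0 (e ▸ hsA))
  have hsM : s ≤ M := hleM _ hsA
  push_neg at hcase   -- M + 1 < s + b
  -- σ = M + 1 - b; facts: 1 ≤ σ, σ + 2 ≤ b, σ < s
  have hσ1 : 1 ≤ M + 1 - b := by omega
  have hσb : M + 1 - b + 2 ≤ b := by omega
  have hσs : M + 1 - b < s := by omega
  have hb2 : 2 ≤ b := by omega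
  have hgA : g A = ((A \ Finset.Icc b M) ∪ Finset.Icc (b - 1) (M - 1)) ∪ {M + 1 - b} := by
    rw [g, dif_pos h, if_neg (by omega)]
  set A' : Finset ℕ := ((A \ Finset.Icc b M) ∪ Finset.Icc (b - 1) (M - 1)) ∪ {M + 1 - b} with hA'
  have hmem' : ∀ x, x ∈ A' ↔ ((x ∈ A ∧ ¬(b ≤ x ∧ x ≤ M)) ∨ (b - 1 ≤ x ∧ x ≤ M - 1) ∨ x = M + 1 - b) := by
    intro x
    simp only [hA', mem_union, mem_sdiff, mem_Icc, mem_singleton]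
    tauto
  -- elements of A \ Icc b M are ≤ b - 2
  have hlow : ∀ x ∈ A, ¬(b ≤ x ∧ x ≤ M) → x ≤ b - 2 := by
    intro x hx hcon
    have h1 := hleM x hx
    have h2 : x ≠ b - 1 := fun e => hbpred (e ▸ hx)
    omega
  have hd1 : Disjoint (A \ Finset.Icc b M) (Finset.Icc (b - 1) (M - 1)) := by
    rw [Finset.disjoint_left]
    intro x hx hx2
    rw [mem_sdiff, mem_Icc] at hx
    rw [mem_Icc] at hx2
    have := hlow x hx.1 (by omega)
    omega
  have hd2 : Disjoint ((A \ Finset.Icc b M) ∪ Finset.Icc (b - 1) (M - 1)) ({M + 1 - b} : Finset ℕ) := by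
    rw [Finset.disjoint_right]
    intro x hx hx2
    rw [mem_singleton] at hx
    rw [mem_union, mem_sdiff, mem_Icc, mem_Icc] at hx2
    rcases hx2 with ⟨hxA, hcon⟩ | hcon
    · have := hsle x hxA; omega
    · omega
  have hIccsub : Finset.Icc b M ⊆ A := bf_icc A h
  have hcard1 : (Finset.Icc b M).card = M + 1 - b := by rw [Nat.card_Icc]
  have hcard2 : (Finset.Icc (b - 1) (M - 1)).card = M + 1 - b := by rw [Nat.card_Icc]; omega
  have hsum' : (∑ x ∈ A', x) = ∑ x ∈ A, x := by
    rw [hA', Finset.sum_union hd2, Finset.sum_union hd1, Finset.sum_singleton]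
    have e1 := Finset.sum_sdiff (f := id) hIccsub
    simp only [id] at e1
    have e3 := sum_icc_shift b M (by omega) hbM
    omega
  have hcard' : A.card + 1 = A'.card := by
    rw [hA', Finset.card_union_of_disjoint hd2, Finset.card_union_of_disjoint hd1,
      Finset.card_singleton]
    have e1 := Finset.card_sdiff_add_card_eq_card hIccsub
    omega
  -- structure of A'
  have hA'ne : A'.Nonempty := ⟨M + 1 - b, by rw [hmem']; right; right; rfl⟩
  have hub' : ∀ x ∈ A', x ≤ M - 1 := by
    intro x hx
    rw [hmem'] at hx
    rcases hx with ⟨hx, hc⟩ | hc | hc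
    · have := hlow x hx hc; omega
    · omega
    · omega
  have hlb' : ∀ x ∈ A', M + 1 - b ≤ x := by
    intro x hx
    rw [hmem'] at hx
    rcases hx with ⟨hx, hc⟩ | hc | hc
    · have := hsle x hx; omega
    · omega
    · omega
  have hpos' : ∀ x ∈ A', 1 ≤ x := fun x hx => by have := hlb' x hx; omega
  have h0' : 0 ∉ A' := fun hx => by have := hpos' 0 hx; omega
  have hM' : A'.max' hA'ne = M - 1 := by
    apply le_antisymm
    · exact Finset.max'_le _ _ _ hub'
    · exact Finset.le_max' _ _ (by rw [hmem']; right; left; omega)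
  have hmin' : A'.min' hA'ne = M + 1 - b := by
    apply le_antisymm
    · exact A'.min'_le _ (by rw [hmem']; right; right; rfl)
    · exact Finset.le_min' _ _ _ hlb'
  have hbf'le : bf A' hA'ne ≤ b - 1 := by
    apply bf_le A' hA'ne (by rw [hmem']; right; left; omega)
    rw [hM']
    intro y hy
    rw [mem_Icc] at hy
    rw [hmem']
    right; left
    exact hy
  have hcase' : A'.min' hA'ne + bf A' hA'ne ≤ A'.max' hA'ne + 1 := by
    rw [hmin', hM']
    omega
  have h2s' : 2 * A'.min' hA'ne ≤ A'.max' hA'ne := by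
    rw [hmin', hM']
    omega
  have hgg : g A' = A := by
    rw [g, dif_pos hA'ne, if_pos hcase', hmin', hM']
    have e1 : M - 1 - (M + 1 - b) + 1 = b - 1 := by omega
    have e2 : M - 1 - (M + 1 - b) + 2 = b := by omega
    have e3 : M - 1 + 1 = M := by omega
    rw [e1, e2, e3]
    ext x
    simp only [mem_union, mem_sdiff, mem_erase, mem_Icc, hmem' x]
    by_cases hx : x ∈ A
    · have h1 := hleM x hx
      have h2 := hsle x hx
      have h3 : x ≠ b - 1 := fun e => hbpred (e ▸ hx)
      simp only [hx, true_and, iff_true, true_iff]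
      omega
    · have h2 : ¬(b ≤ x ∧ x ≤ M) := fun hc => hx (hbicc x hc.1 hc.2)
      simp only [hx, false_and, false_or, and_false, or_false, iff_false, false_iff]
      omega
  refine ⟨by rw [hgA]; exact hsum', by rw [hgA]; exact hcard', ?_, ?_⟩
  · rw [hgA]; exact hgg
  · rw [hgA]; intro x hx; exact ⟨hpos' x hx, by have := hub' x hx; omega⟩

theorem franklin (N n : ℕ) (hnN : n < N) (hpent : ∀ j : ℤ, (2 * n : ℤ) ≠ j * (3 * j + 1)) :
    ∑ A ∈ (Finset.Icc 1 N).powerset.filter (fun A => ∑ x ∈ A, x = n), (-1 : ℤ) ^ A.card = 0 := by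
  have hn0 : n ≠ 0 := by
    intro e
    exact hpent 0 (by simp [e])
  have main : ∀ A ∈ (Finset.Icc 1 N).powerset.filter (fun A => ∑ x ∈ A, x = n),
      g A ∈ (Finset.Icc 1 N).powerset.filter (fun A => ∑ x ∈ A, x = n) ∧ g (g A) = A ∧
      ((g A).card + 1 = A.card ∨ A.card + 1 = (g A).card) := by
    intro A hA
    rw [mem_filter, mem_powerset] at hA
    obtain ⟨hsub, hsum⟩ := hA
    have h : A.Nonempty := by
      rcases A.eq_empty_or_nonempty with rfl | h'
      · simp at hsum; omega
      · exact h'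
    have h0 : 0 ∉ A := by
      intro hx
      have := mem_Icc.mp (hsub hx)
      omega
    have hbound : ∀ x ∈ A, 1 ≤ x ∧ x ≤ N := fun x hx => mem_Icc.mp (hsub hx)
    have hMn : A.max' h ≤ n := by
      rw [← hsum]
      exact Finset.single_le_sum (f := fun x => x) (fun i _ => Nat.zero_le i) (A.max'_mem h)
    -- common facts for degenerate analysis
    have hsA : A.min' h ∈ A := A.min'_mem h
    have hbA : bf A h ∈ A := bf_mem A h
    have hsb : A.min' h ≤ bf A h := A.min'_le _ hbA
    have hbM : bf A h ≤ A.max' h := A.le_max' _ hbA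
    have hs1 : 1 ≤ A.min' h := Nat.pos_of_ne_zero (fun e => h0 (e ▸ hsA))
    have hstair : A.min' h = bf A h → A = Finset.Icc (bf A h) (A.max' h) := by
      intro he
      apply Finset.Subset.antisymm
      · intro x hx
        rw [mem_Icc]
        exact ⟨he ▸ A.min'_le x hx, A.le_max' x hx⟩
      · exact bf_icc A h
    by_cases hcase : A.min' h + bf A h ≤ A.max' h + 1
    · have h2s : 2 * A.min' h ≤ A.max' h := by
        by_contra hcon
        push_neg at hcon
        have he1 : A.min' h = bf A h := by omega
        have he2 : A.max' h + 1 = 2 * bf A h := by omega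
        have hAeq := hstair he1
        have hkey := sum_Icc_eq (bf A h) (A.max' h) (by omega) hbM
        rw [← hAeq, hsum] at hkey
        refine hpent (-(bf A h : ℤ)) ?_
        have hc1 : 2 * (n : ℤ) + (bf A h : ℤ) * bf A h
            = (A.max' h : ℤ) * A.max' h + A.max' h + bf A h := by exact_mod_cast hkey
        have hc2 : ((A.max' h : ℤ)) = 2 * (bf A h : ℤ) - 1 := by
          have := he2; omega
        rw [hc2] at hc1
        ring_nf
        ring_nf at hc1
        linarith
      obtain ⟨hsum', hcard', hgg, hbd⟩ := key1 A h h0 hcase h2s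
      refine ⟨?_, hgg, Or.inl hcard'⟩
      rw [mem_filter, mem_powerset]
      constructor
      · intro x hx
        rw [mem_Icc]
        have := hbd x hx
        have := hMn
        omega
      · rw [hsum', hsum]
    · have hnc : A.max' h + 3 ≤ 2 * bf A h := by
        by_contra hcon
        push_neg at hcon
        have he1 : A.min' h = bf A h := by omega
        have he2 : A.max' h + 2 = 2 * bf A h := by omega
        have hAeq := hstair he1
        have hkey := sum_Icc_eq (bf A h) (A.max' h) (by omega) hbM
        rw [← hAeq, hsum] at hkey
        refine hpent ((bf A h : ℤ) - 1) ?_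
        have hc1 : 2 * (n : ℤ) + (bf A h : ℤ) * bf A h
            = (A.max' h : ℤ) * A.max' h + A.max' h + bf A h := by exact_mod_cast hkey
        have hc2 : ((A.max' h : ℤ)) = 2 * (bf A h : ℤ) - 2 := by
          have := he2; omega
        rw [hc2] at hc1
        ring_nf
        ring_nf at hc1
        linarith
      obtain ⟨hsum', hcard', hgg, hbd⟩ := key2 A h h0 hcase hnc
      refine ⟨?_, hgg, Or.inr hcard'⟩
      rw [mem_filter, mem_powerset]
      constructor
      · intro x hx
        rw [mem_Icc]
        have := hbd x hx
        have := hMn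
        omega
      · rw [hsum', hsum]
  refine Finset.sum_involution (fun A _ => g A) ?_ ?_ ?_ ?_
  · intro A ha
    show (-1 : ℤ) ^ A.card + (-1 : ℤ) ^ (g A).card = 0
    rcases (main A ha).2.2 with hc | hc <;> rw [← hc, pow_succ] <;> ring
  · intro A ha _
    intro he
    have he' : g A = A := he
    rcases (main A ha).2.2 with hc | hc <;> rw [he'] at hc <;> omega
  · intro A ha
    exact (main A ha).1
  · intro A ha
    exact (main A ha).2.1

end Frank

namespace Frank

open PowerSeries

lemma coeff_prod_one_sub (R : Type*) [CommRing R] (N m : ℕ) :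
    PowerSeries.coeff (R := R) m (∏ i ∈ Finset.range N, (1 - (PowerSeries.X : PowerSeries R) ^ (i + 1))) =
    ∑ A ∈ (Finset.Icc 1 N).powerset.filter (fun A => ∑ x ∈ A, x = m), (-1 : R) ^ A.card := by
  have hIcc : Finset.Icc 1 N = Finset.image (· + 1) (Finset.range N) := by
    ext x
    simp only [Finset.mem_Icc, Finset.mem_image, Finset.mem_range]
    constructor
    · rintro ⟨h1, h2⟩; exact ⟨x - 1, by omega, by omega⟩
    · rintro ⟨y, h1, rfl⟩; omega
  have h1 : ∏ i ∈ Finset.range N, (1 - (PowerSeries.X : PowerSeries R) ^ (i + 1)) =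
      ∏ j ∈ Finset.Icc 1 N, (1 - (PowerSeries.X : PowerSeries R) ^ j) := by
    rw [hIcc, Finset.prod_image (fun x _ y _ hxy => by omega)]
  rw [h1]
  have h2 : ∀ j ∈ Finset.Icc 1 N, (1 : PowerSeries R) - PowerSeries.X ^ j
      = -(PowerSeries.X ^ j) + 1 := fun j _ => by ring
  rw [Finset.prod_congr rfl h2, Finset.prod_add]
  simp only [Finset.prod_const_one, mul_one]
  rw [map_sum]
  have h3 : ∀ t : Finset ℕ, (PowerSeries.coeff (R := R) m) (∏ i ∈ t, -((PowerSeries.X : PowerSeries R) ^ i))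
      = if (∑ x ∈ t, x) = m then (-1 : R) ^ t.card else 0 := by
    intro t
    have e1 : ∏ i ∈ t, -((PowerSeries.X : PowerSeries R) ^ i)
        = PowerSeries.C (R := R) ((-1 : R) ^ t.card) * PowerSeries.X ^ (∑ i ∈ t, i) := by
      calc ∏ i ∈ t, -((PowerSeries.X : PowerSeries R) ^ i)
          = ∏ i ∈ t, ((-1 : PowerSeries R) * PowerSeries.X ^ i) :=
            Finset.prod_congr rfl (fun i _ => by ring)
        _ = (∏ _i ∈ t, (-1 : PowerSeries R)) * ∏ i ∈ t, (PowerSeries.X : PowerSeries R) ^ i :=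
            Finset.prod_mul_distrib
        _ = (-1 : PowerSeries R) ^ t.card * PowerSeries.X ^ (∑ i ∈ t, i) := by
            rw [Finset.prod_const, Finset.prod_pow_eq_pow_sum]
        _ = PowerSeries.C (R := R) ((-1 : R) ^ t.card) * PowerSeries.X ^ (∑ i ∈ t, i) := by
            rw [map_pow, map_neg, map_one]
    rw [e1, PowerSeries.coeff_C_mul, PowerSeries.coeff_X_pow, mul_ite, mul_one, mul_zero]
    exact if_congr eq_comm rfl rfl
  rw [Finset.sum_congr rfl (fun t _ => h3 t)]
  exact (Finset.sum_filter _ _).symm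

lemma coeff_mul_of_23 (R : Type*) [CommRing R] (N k : ℕ) (hk : ¬ (23 ∣ k)) :
    PowerSeries.coeff (R := R) k (∏ i ∈ Finset.range N,
      (1 - (PowerSeries.X : PowerSeries R) ^ (23 * (i + 1)))) = 0 := by
  have := Finset.prod_induction (s := Finset.range N)
    (fun i => (1 : PowerSeries R) - PowerSeries.X ^ (23 * (i + 1)))
    (fun f => ∀ j : ℕ, ¬ (23 ∣ j) → PowerSeries.coeff (R := R) j f = 0) ?_ ?_ ?_
  · exact this k hk
  · intro f g hf hg j hj
    rw [PowerSeries.coeff_mul]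
    apply Finset.sum_eq_zero
    rintro ⟨a, b⟩ hab
    rw [Finset.HasAntidiagonal.mem_antidiagonal] at hab
    by_cases ha : 23 ∣ a
    · have hb : ¬ (23 ∣ b) := by omega
      rw [hg b hb, mul_zero]
    · rw [hf a ha, zero_mul]
  · intro j hj
    rw [PowerSeries.coeff_one, if_neg (by omega)]
  · intro i _ j hj
    rw [map_sub, PowerSeries.coeff_one, PowerSeries.coeff_X_pow,
      if_neg (by omega), if_neg (by omega), sub_zero]

end Frank

/-- If `q` is a prime with Legendre symbol `(q/23) = -1`, then `τ(q) ≡ 0 (mod 23)`. -/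
theorem stmt15 (q : ℕ) (hq : q.Prime) (hleg : legendreSym 23 q = -1) :
    (23 : ℤ) ∣ ramanujanTau q := by
  have hsq : ¬ IsSquare ((q : ℕ) : ZMod 23) := (legendreSym.eq_neg_one_iff' 23).mp hleg
  have h2 : 2 ≤ q := hq.two_le
  obtain ⟨m, rfl⟩ : ∃ m, q = m + 1 := ⟨q - 1, by omega⟩
  rw [show (23:ℤ) = ((23:ℕ):ℤ) by norm_num, ← ZMod.intCast_zmod_eq_zero_iff_dvd]
  unfold ramanujanTau
  set F : PowerSeries ℤ :=
    PowerSeries.X * ∏ i ∈ Finset.range (m+1), ((1 : PowerSeries ℤ) - PowerSeries.X ^ (i + 1)) ^ 24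
    with hF
  have hmap : ((PowerSeries.coeff (R := ℤ) (m+1) F : ℤ) : ZMod 23)
      = PowerSeries.coeff (R := (ZMod 23)) (m+1) (PowerSeries.map (Int.castRingHom (ZMod 23)) F) := by
    rw [PowerSeries.coeff_map]
    rfl
  rw [hmap, hF]
  haveI : CharP (PowerSeries (ZMod 23)) 23 :=
    charP_of_injective_ringHom (f := (PowerSeries.C (R := ZMod 23))) PowerSeries.C_injective 23
  simp only [map_mul, map_prod, map_pow, map_sub, map_one, PowerSeries.map_X]
  have hfac : ∀ i : ℕ, ((1 : PowerSeries (ZMod 23)) - PowerSeries.X ^ (i+1)) ^ 24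
      = (1 - PowerSeries.X ^ (i+1)) * (1 - PowerSeries.X ^ (23 * (i+1))) := by
    intro i
    have h23 : ((1 : PowerSeries (ZMod 23)) - PowerSeries.X ^ (i+1)) ^ 23
        = 1 - PowerSeries.X ^ (23 * (i+1)) := by
      rw [sub_pow_char, one_pow, ← pow_mul, Nat.mul_comm (i+1) 23]
    rw [show (24 : ℕ) = 23 + 1 from rfl, pow_succ, h23, mul_comm]
  rw [Finset.prod_congr rfl (fun i _ => hfac i), Finset.prod_mul_distrib]
  rw [PowerSeries.coeff_succ_X_mul, PowerSeries.coeff_mul]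
  apply Finset.sum_eq_zero
  rintro ⟨a, b⟩ hab
  rw [Finset.HasAntidiagonal.mem_antidiagonal] at hab
  by_cases hdvd : 23 ∣ b
  · have hpent : ∀ j : ℤ, (2 * a : ℤ) ≠ j * (3 * j + 1) := by
      intro j hj
      apply hsq
      have he2 : ((6*j+1)^2 : ℤ) = 24 * a + 1 := by
        have : ((6*j+1)^2 : ℤ) = 12 * (j * (3*j+1)) + 1 := by ring
        rw [this, ← hj]
        ring
      have habz : (a : ℤ) + b = m := by exact_mod_cast hab
      have hbz : (23:ℤ) ∣ (b:ℤ) := Int.natCast_dvd_natCast.mpr hdvd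
      have hcast : ((24 * (a:ℤ) + 1 : ℤ) : ZMod 23) = (((m:ℤ) + 1 : ℤ) : ZMod 23) := by
        rw [ZMod.intCast_eq_intCast_iff]
        rw [Int.ModEq]
        omega
      refine ⟨((6*j+1 : ℤ) : ZMod 23), ?_⟩
      calc ((m+1 : ℕ) : ZMod 23) = (((m:ℤ) + 1 : ℤ) : ZMod 23) := by push_cast; ring
        _ = ((24 * (a:ℤ) + 1 : ℤ) : ZMod 23) := hcast.symm
        _ = (((6*j+1)^2 : ℤ) : ZMod 23) := by rw [he2]
        _ = ((6*j+1 : ℤ) : ZMod 23) * ((6*j+1 : ℤ) : ZMod 23) := by push_cast; ring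
    have ha0 : PowerSeries.coeff (R := (ZMod 23)) a
        (∏ i ∈ Finset.range (m+1), (1 - (PowerSeries.X : PowerSeries (ZMod 23)) ^ (i+1))) = 0 := by
      rw [Frank.coeff_prod_one_sub]
      have hz := Frank.franklin (m+1) a (by omega) hpent
      have hc : ((∑ A ∈ (Finset.Icc 1 (m+1)).powerset.filter (fun A => ∑ x ∈ A, x = a),
          (-1 : ℤ) ^ A.card : ℤ) : ZMod 23)
          = ∑ A ∈ (Finset.Icc 1 (m+1)).powerset.filter (fun A => ∑ x ∈ A, x = a),
          (-1 : ZMod 23) ^ A.card := by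
        push_cast
        rfl
      rw [← hc, hz, Int.cast_zero]
    rw [ha0, zero_mul]
  · rw [Frank.coeff_mul_of_23 (ZMod 23) (m+1) b hdvd, mul_zero]
end
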